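/- Let p, q > N-1 and let x : [0,∞) → ℝ^N be a C¹ solution with pairwise distinct coordinates of the noncompact system dx_i/dt = (q-p) + (q+p)x_i + 2∑_{j≠i}(x_i x_j - 1)/(x_i - x_j) on the chamber C_N = {1 ≤ x_1 ≤ ... ≤ x_N}. Then e_1^N(x(t)) = e^{(p+q)t}( e_1^N(x_0) - N(p-q)/(p+q) ) + N(p-q)/(p+q), and for 2 ≤ k ≤ N the function e_k^N(x(t)) solves the linear ODE d/dt e_k = k((p+q)+1-k)e_k + (N-k+1)(q-p)e_{k-1} - (N-k+2)(N-k+1)·(-1)·e_{k-2}; in particular the map t ↦ e(x(t)) extends to all t ≥ 0 (no finite-time explosion of the symmetric functions). -/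

import Mathlib

open Finset

/-- The elementary symmetric polynomial of degree `k` in the variables indexed by `S`. -/
noncomputable def esym {N : ℕ} (k : ℕ) (S : Finset (Fin N)) (x : Fin N → ℝ) : ℝ :=
  ∑ s ∈ Finset.powersetCard k S, ∏ i ∈ s, x i

namespace Stmt19Aux

variable {N : ℕ}

lemma esym_rec {k : ℕ} {S : Finset (Fin N)} {i : Fin N} (hi : i ∈ S) (x : Fin N → ℝ) :
    esym (k+1) S x = esym (k+1) (S.erase i) x + x i * esym k (S.erase i) x := by
  classical
  unfold esym
  conv_lhs => rw [← Finset.insert_erase hi]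
  rw [Finset.powersetCard_succ_insert (Finset.notMem_erase i S), Finset.sum_union]
  · congr 1
    rw [Finset.sum_image, Finset.mul_sum]
    · refine Finset.sum_congr rfl fun B hB => ?_
      have hiB : i ∉ B := fun h =>
        (Finset.notMem_erase i S) ((Finset.mem_powersetCard.1 hB).1 h)
      rw [Finset.prod_insert hiB]
    · intro B hB C hC hBC
      have hiB : i ∉ B := fun h =>
        (Finset.notMem_erase i S) ((Finset.mem_powersetCard.1 hB).1 h)
      have hiC : i ∉ C := fun h =>
        (Finset.notMem_erase i S) ((Finset.mem_powersetCard.1 hC).1 h)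
      have := congrArg (fun T => Finset.erase T i) hBC
      simpa [Finset.erase_insert hiB, Finset.erase_insert hiC] using this
  · rw [Finset.disjoint_left]
    intro A hA hA'
    rcases Finset.mem_image.1 hA' with ⟨B, _, rfl⟩
    have : i ∈ Finset.erase S i :=
      (Finset.mem_powersetCard.1 hA).1 (Finset.mem_insert_self i B)
    exact (Finset.notMem_erase i S) this

/-- Double counting: pairs (A, i) with i ∈ A, |A| = k+1, versus (i, B) with B ⊆ S \ {i}. -/
lemma sum_pairs (k : ℕ) (S : Finset (Fin N)) (F : Fin N → Finset (Fin N) → ℝ) :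
    ∑ A ∈ S.powersetCard (k+1), ∑ i ∈ A, F i (A.erase i)
      = ∑ i ∈ S, ∑ B ∈ (S.erase i).powersetCard k, F i B := by
  classical
  rw [Finset.sum_sigma', Finset.sum_sigma']
  refine Finset.sum_nbij' (fun z => ⟨z.2, z.1.erase z.2⟩)
    (fun z => ⟨insert z.1 z.2, z.1⟩) ?_ ?_ ?_ ?_ ?_
  · rintro ⟨A, i⟩ hz
    rw [Finset.mem_sigma] at hz ⊢
    obtain ⟨hA, hiA⟩ := hz
    obtain ⟨hAS, hcard⟩ := Finset.mem_powersetCard.1 hA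
    refine ⟨hAS hiA, Finset.mem_powersetCard.2 ⟨?_, ?_⟩⟩
    · exact fun a ha => Finset.mem_erase.2
        ⟨(Finset.mem_erase.1 ha).1, hAS (Finset.mem_erase.1 ha).2⟩
    · rw [Finset.card_erase_of_mem hiA, hcard]
      omega
  · rintro ⟨i, B⟩ hz
    rw [Finset.mem_sigma] at hz ⊢
    obtain ⟨hiS, hB⟩ := hz
    obtain ⟨hBS, hcard⟩ := Finset.mem_powersetCard.1 hB
    have hiB : i ∉ B := fun h => Finset.notMem_erase i S (hBS h)
    refine ⟨Finset.mem_powersetCard.2 ⟨?_, ?_⟩, Finset.mem_insert_self i B⟩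
    · intro a ha
      rcases Finset.mem_insert.1 ha with rfl | ha'
      · exact hiS
      · exact Finset.mem_of_mem_erase (hBS ha')
    · rw [Finset.card_insert_of_notMem hiB, hcard]
  · rintro ⟨A, i⟩ hz
    rw [Finset.mem_sigma] at hz
    simp only [Finset.insert_erase hz.2]
  · rintro ⟨i, B⟩ hz
    rw [Finset.mem_sigma] at hz
    have hiB : i ∉ B := fun h =>
      Finset.notMem_erase i S ((Finset.mem_powersetCard.1 hz.2).1 h)
    simp only [Finset.erase_insert hiB]
  · rintro ⟨A, i⟩ _
    rfl

lemma sum_esym_erase (k : ℕ) (S : Finset (Fin N)) (x : Fin N → ℝ) :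
    ∑ i ∈ S, esym k (S.erase i) x = ((S.card : ℝ) - k) * esym k S x := by
  classical
  unfold esym
  rw [Finset.mul_sum,
    Finset.sum_comm' (s := S) (t := fun i => (S.erase i).powersetCard k)
      (t' := S.powersetCard k) (s' := fun B => S \ B)
      (f := fun _ B => ∏ j ∈ B, x j) ?_]
  · refine Finset.sum_congr rfl fun B hB => ?_
    obtain ⟨hBS, hcard⟩ := Finset.mem_powersetCard.1 hB
    rw [Finset.sum_const, nsmul_eq_mul, Finset.card_sdiff_of_subset hBS,
      Nat.cast_sub (Finset.card_le_card hBS), hcard]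
  · intro i B
    simp only [Finset.mem_powersetCard, Finset.subset_erase, Finset.mem_sdiff]
    tauto

lemma sum_mul_esym_erase (k : ℕ) (S : Finset (Fin N)) (x : Fin N → ℝ) :
    ∑ i ∈ S, x i * esym k (S.erase i) x = ((k : ℝ) + 1) * esym (k+1) S x := by
  classical
  have h : ∀ i ∈ S, x i * esym k (S.erase i) x
      = esym (k+1) S x - esym (k+1) (S.erase i) x := by
    intro i hi
    rw [esym_rec hi x]; ring
  rw [Finset.sum_congr rfl h, Finset.sum_sub_distrib, Finset.sum_const,
    sum_esym_erase (k+1) S x, nsmul_eq_mul]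
  push_cast
  ring

lemma esym_erase_sub {k : ℕ} {S : Finset (Fin N)} {i j : Fin N} (hi : i ∈ S) (hj : j ∈ S)
    (hij : i ≠ j) (x : Fin N → ℝ) :
    esym (k+1) (S.erase i) x - esym (k+1) (S.erase j) x
      = (x j - x i) * esym k ((S.erase i).erase j) x := by
  have hj' : j ∈ S.erase i := Finset.mem_erase.2 ⟨hij.symm, hj⟩
  have hi' : i ∈ S.erase j := Finset.mem_erase.2 ⟨hij, hi⟩
  rw [esym_rec hj' x, esym_rec hi' x, Finset.erase_right_comm]
  ring

lemma sum_pair_swap (a : Fin N → Fin N → ℝ) :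
    ∑ i : Fin N, ∑ j ∈ Finset.univ.erase i, a i j
      = ∑ i : Fin N, ∑ j ∈ Finset.univ.erase i, a j i := by
  classical
  rw [Finset.sum_comm' (s := (Finset.univ : Finset (Fin N)))
    (t := fun i => Finset.univ.erase i) (t' := Finset.univ)
    (s' := fun j => Finset.univ.erase j) (f := a) ?_]
  · intro i j
    simp only [Finset.mem_univ, Finset.mem_erase, true_and, and_true]
    exact ⟨fun h => h.symm, fun h => h.symm⟩

lemma hasDerivAt_esym (k : ℕ) (x : ℝ → Fin N → ℝ) (t : ℝ) (d : Fin N → ℝ)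
    (hx : ∀ i : Fin N, HasDerivAt (fun s => x s i) (d i) t) :
    HasDerivAt (fun s => esym (k+1) Finset.univ (x s))
      (∑ i : Fin N, d i * esym k (Finset.univ.erase i) (x t)) t := by
  classical
  have h1 : ∀ A ∈ (Finset.univ : Finset (Fin N)).powersetCard (k+1),
      HasDerivAt (fun s => ∏ i ∈ A, x s i)
        (∑ i ∈ A, (∏ j ∈ A.erase i, x t j) * d i) t := by
    intro A _
    simpa [smul_eq_mul] using HasDerivAt.fun_finsetProd (u := A) (f := fun i s => x s i)
      (f' := d) (fun i _ => hx i)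
  have h2 := HasDerivAt.fun_sum h1
  have h3 : (∑ A ∈ (Finset.univ : Finset (Fin N)).powersetCard (k+1),
        ∑ i ∈ A, (∏ j ∈ A.erase i, x t j) * d i)
      = ∑ i : Fin N, d i * esym k (Finset.univ.erase i) (x t) := by
    rw [sum_pairs k Finset.univ (fun i B => (∏ j ∈ B, x t j) * d i)]
    refine Finset.sum_congr rfl fun i _ => ?_
    rw [esym, Finset.mul_sum]
    exact Finset.sum_congr rfl fun B _ => mul_comm _ _
  rw [← h3]
  exact h2

end Stmt19Aux

open Stmt19Aux

theorem stmt19 {N : ℕ} (hN : 1 ≤ N) (p q : ℝ)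
    (hp : (N : ℝ) - 1 < p) (hq : (N : ℝ) - 1 < q)
    (x : ℝ → Fin N → ℝ)
    (hchamber : ∀ t : ℝ, 0 ≤ t → (( ∀ i : Fin N, 1 ≤ x t i) ∧ ∀ i j : Fin N, i ≤ j → x t i ≤ x t j))
    (hdist : ∀ t : ℝ, 0 ≤ t → ∀ i j : Fin N, i ≠ j → x t i ≠ x t j)
    (hODE : ∀ t : ℝ, 0 ≤ t → ∀ i : Fin N,
      HasDerivAt (fun s => x s i)
        ((q - p) + (q + p) * x t i
          + 2 * ∑ j ∈ (univ : Finset (Fin N)).erase i,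
              (x t i * x t j - 1) / (x t i - x t j)) t) :
    (∀ t : ℝ, 0 ≤ t →
      ∑ i : Fin N, x t i
        = Real.exp ((p + q) * t)
            * (∑ i : Fin N, x 0 i - N * (p - q) / (p + q))
          + N * (p - q) / (p + q)) ∧
    (∀ k : ℕ, 2 ≤ k → k ≤ N → ∀ t : ℝ, 0 ≤ t →
      HasDerivAt (fun s => esym k univ (x s))
        ((k : ℝ) * ((p + q) + 1 - k) * esym k univ (x t)
          + ((N : ℝ) - k + 1) * (q - p) * esym (k - 1) univ (x t)
          + ((N : ℝ) - k + 2) * ((N : ℝ) - k + 1) * esym (k - 2) univ (x t)) t) := by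
  classical
  have hN1 : (0 : ℝ) ≤ (N : ℝ) - 1 := by
    have : (1 : ℝ) ≤ (N : ℝ) := by exact_mod_cast hN
    linarith
  have hpq : (0 : ℝ) < p + q := by linarith
  have hpq' : p + q ≠ 0 := ne_of_gt hpq
  set c : ℝ := (N : ℝ) * (p - q) / (p + q) with hc
  set f : ℝ → ℝ := fun s => ∑ i : Fin N, x s i with hf
  -- derivative of f
  have hfderiv : ∀ t : ℝ, 0 ≤ t → HasDerivAt f ((p + q) * (f t - c)) t := by
    intro t ht
    have h1 := HasDerivAt.fun_sum (fun i (_ : i ∈ (Finset.univ : Finset (Fin N))) => hODE t ht i)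
    have hzero : ∑ i : Fin N, (2 * ∑ j ∈ (univ : Finset (Fin N)).erase i,
        (x t i * x t j - 1) / (x t i - x t j)) = 0 := by
      have : ∀ i : Fin N, (2 * ∑ j ∈ (univ : Finset (Fin N)).erase i,
          (x t i * x t j - 1) / (x t i - x t j))
          = ∑ j ∈ (univ : Finset (Fin N)).erase i,
              2 * ((x t i * x t j - 1) / (x t i - x t j)) := by
        intro i; rw [Finset.mul_sum]
      rw [Finset.sum_congr rfl fun i _ => this i]
      have hswap := sum_pair_swap
        (fun i j => 2 * ((x t i * x t j - 1) / (x t i - x t j)))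
      have hanti : ∀ i j : Fin N,
          2 * ((x t j * x t i - 1) / (x t j - x t i))
            = -(2 * ((x t i * x t j - 1) / (x t i - x t j))) := by
        intro i j
        rw [show x t j - x t i = -(x t i - x t j) by ring, div_neg, mul_comm (x t j)]
        ring
      set S := ∑ i : Fin N, ∑ j ∈ Finset.univ.erase i,
        2 * ((x t i * x t j - 1) / (x t i - x t j)) with hS
      have : S = -S := by
        calc S = ∑ i : Fin N, ∑ j ∈ Finset.univ.erase i,
            2 * ((x t j * x t i - 1) / (x t j - x t i)) := hswap
        _ = ∑ i : Fin N, ∑ j ∈ Finset.univ.erase i,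
            -(2 * ((x t i * x t j - 1) / (x t i - x t j))) := by
            exact Finset.sum_congr rfl fun i _ =>
              Finset.sum_congr rfl fun j _ => hanti i j
        _ = -S := by rw [hS]; simp [Finset.sum_neg_distrib]
      linarith
    have heq : (∑ i : Fin N, ((q - p) + (q + p) * x t i
        + 2 * ∑ j ∈ (univ : Finset (Fin N)).erase i,
            (x t i * x t j - 1) / (x t i - x t j)))
        = (p + q) * (f t - c) := by
      rw [Finset.sum_add_distrib, Finset.sum_add_distrib, hzero, add_zero,
        Finset.sum_const, ← Finset.mul_sum, nsmul_eq_mul, Finset.card_univ,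
        Fintype.card_fin]
      have hcc : (p + q) * c = (N : ℝ) * (p - q) := by
        rw [hc]; field_simp
      have : (p + q) * (f t - c) = (p + q) * f t - (N : ℝ) * (p - q) := by
        rw [mul_sub, hcc]
      rw [this, hf]
      ring
    rw [← heq]
    exact h1
  constructor
  · -- Part 1
    intro t ht
    set g : ℝ → ℝ := fun s => Real.exp (-(p + q) * s) * (f s - c) with hg
    have hgderiv : ∀ s : ℝ, 0 ≤ s → HasDerivAt g 0 s := by
      intro s hs
      have he : HasDerivAt (fun u => Real.exp (-(p + q) * u))
          (Real.exp (-(p + q) * s) * (-(p + q))) s := by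
        have := ((hasDerivAt_id s).const_mul (-(p + q))).exp
        simpa using this
      have hsub : HasDerivAt (fun u => f u - c) ((p + q) * (f s - c)) s :=
        (hfderiv s hs).sub_const c
      have := he.fun_mul hsub
      refine this.congr_deriv ?_
      ring
    have hconst : g t = g 0 := by
      have hcont : ContinuousOn g (Set.Icc 0 t) := fun s hs =>
        ((hgderiv s hs.1).continuousAt).continuousWithinAt
      have hd : ∀ s ∈ Set.Ico (0 : ℝ) t, HasDerivWithinAt g 0 (Set.Ici s) s := fun s hs =>
        (hgderiv s hs.1).hasDerivWithinAt
      exact constant_of_has_deriv_right_zero hcont hd t (Set.mem_Icc.2 ⟨ht, le_refl t⟩)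
    have hg0 : g 0 = f 0 - c := by simp [hg]
    have key : Real.exp ((p + q) * t) * Real.exp (-(p + q) * t) = 1 := by
      rw [← Real.exp_add]; ring_nf; exact Real.exp_zero
    have h2 : f t - c = Real.exp ((p + q) * t) * (f 0 - c) := by
      have := congrArg (fun z => Real.exp ((p + q) * t) * z) (hconst.trans hg0)
      simp only [hg] at this
      rw [← mul_assoc, key, one_mul] at this
      exact this
    have : f t = Real.exp ((p + q) * t) * (f 0 - c) + c := by linarith
    simpa [hf, hc] using this
  · -- Part 2
    intro k hk2 hkN t ht
    obtain ⟨m, rfl⟩ : ∃ m, k = m + 2 := ⟨k - 2, by omega⟩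
    have hsub1 : m + 2 - 1 = m + 1 := rfl
    have hsub2 : m + 2 - 2 = m := rfl
    rw [hsub1, hsub2]
    set d : Fin N → ℝ := fun i => (q - p) + (q + p) * x t i
      + 2 * ∑ j ∈ (univ : Finset (Fin N)).erase i,
          (x t i * x t j - 1) / (x t i - x t j) with hd
    have hderiv := hasDerivAt_esym (m + 1) x t d (fun i => hODE t ht i)
    have hcard : ((Finset.univ : Finset (Fin N)).card : ℝ) = N := by
      rw [Finset.card_univ, Fintype.card_fin]
    have hcard' : ∀ i : Fin N, (((Finset.univ : Finset (Fin N)).erase i).card : ℝ)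
        = (N : ℝ) - 1 := by
      intro i
      rw [Finset.card_erase_of_mem (Finset.mem_univ i), Finset.card_univ, Fintype.card_fin]
      have : 1 ≤ N := hN
      push_cast [Nat.cast_sub this]
      ring
    -- the three partial sums
    have hS1 : ∑ i : Fin N, (q - p) * esym (m+1) (Finset.univ.erase i) (x t)
        = ((N : ℝ) - (m + 1)) * (q - p) * esym (m+1) Finset.univ (x t) := by
      rw [← Finset.mul_sum, sum_esym_erase (m+1) Finset.univ (x t), hcard]
      push_cast
      ring
    have hS2 : ∑ i : Fin N, ((q + p) * x t i) * esym (m+1) (Finset.univ.erase i) (x t)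
        = (q + p) * ((m : ℝ) + 2) * esym (m+2) Finset.univ (x t) := by
      have : ∀ i : Fin N, ((q + p) * x t i) * esym (m+1) (Finset.univ.erase i) (x t)
          = (q + p) * (x t i * esym (m+1) (Finset.univ.erase i) (x t)) := fun i => by ring
      rw [Finset.sum_congr rfl fun i _ => this i, ← Finset.mul_sum,
        sum_mul_esym_erase (m+1) Finset.univ (x t)]
      push_cast
      ring
    -- third sum
    have hxne : ∀ i j : Fin N, i ≠ j → x t i - x t j ≠ 0 := fun i j hij =>
      sub_ne_zero.2 (hdist t ht i j hij)
    have hQ1 : ∑ i : Fin N, ∑ j ∈ Finset.univ.erase i,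
        x t i * x t j * esym m ((Finset.univ.erase i).erase j) (x t)
        = ((m : ℝ) + 1) * ((m : ℝ) + 2) * esym (m+2) Finset.univ (x t) := by
      have hinner : ∀ i : Fin N, ∑ j ∈ Finset.univ.erase i,
          x t i * x t j * esym m ((Finset.univ.erase i).erase j) (x t)
          = x t i * (((m : ℝ) + 1) * esym (m+1) (Finset.univ.erase i) (x t)) := by
        intro i
        rw [← sum_mul_esym_erase m (Finset.univ.erase i) (x t), Finset.mul_sum]
        refine Finset.sum_congr rfl fun j _ => by ring
      rw [Finset.sum_congr rfl fun i _ => hinner i]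
      have : ∀ i : Fin N, x t i * (((m : ℝ) + 1) * esym (m+1) (Finset.univ.erase i) (x t))
          = ((m : ℝ) + 1) * (x t i * esym (m+1) (Finset.univ.erase i) (x t)) := fun i => by ring
      rw [Finset.sum_congr rfl fun i _ => this i, ← Finset.mul_sum,
        sum_mul_esym_erase (m+1) Finset.univ (x t)]
      push_cast
      ring
    have hQ2 : ∑ i : Fin N, ∑ j ∈ Finset.univ.erase i,
        esym m ((Finset.univ.erase i).erase j) (x t)
        = ((N : ℝ) - (m + 1)) * ((N : ℝ) - m) * esym m Finset.univ (x t) := by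
      have hinner : ∀ i : Fin N, ∑ j ∈ Finset.univ.erase i,
          esym m ((Finset.univ.erase i).erase j) (x t)
          = ((N : ℝ) - 1 - m) * esym m (Finset.univ.erase i) (x t) := by
        intro i
        rw [sum_esym_erase m (Finset.univ.erase i) (x t), hcard' i]
      rw [Finset.sum_congr rfl fun i _ => hinner i, ← Finset.mul_sum,
        sum_esym_erase m Finset.univ (x t), hcard]
      ring
    set a : Fin N → Fin N → ℝ := fun i j =>
      2 * ((x t i * x t j - 1) / (x t i - x t j)) * esym (m+1) (Finset.univ.erase i) (x t)
      with ha
    have hS3 : ∑ i : Fin N, (2 * ∑ j ∈ (univ : Finset (Fin N)).erase i,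
          (x t i * x t j - 1) / (x t i - x t j)) * esym (m+1) (Finset.univ.erase i) (x t)
        = -(((m : ℝ) + 1) * ((m : ℝ) + 2)) * esym (m+2) Finset.univ (x t)
          + ((N : ℝ) - (m + 1)) * ((N : ℝ) - m) * esym m Finset.univ (x t) := by
      have hrw : ∀ i : Fin N, (2 * ∑ j ∈ (univ : Finset (Fin N)).erase i,
            (x t i * x t j - 1) / (x t i - x t j)) * esym (m+1) (Finset.univ.erase i) (x t)
          = ∑ j ∈ Finset.univ.erase i, a i j := by
        intro i
        simp only [ha]
        rw [Finset.mul_sum, Finset.sum_mul]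
      rw [Finset.sum_congr rfl fun i _ => hrw i]
      have hpairsum : ∀ i j : Fin N, i ≠ j → a i j + a j i
          = -2 * (x t i * x t j - 1) * esym m ((Finset.univ.erase i).erase j) (x t) := by
        intro i j hij
        have h5 : esym (m+1) (Finset.univ.erase i) (x t)
            - esym (m+1) (Finset.univ.erase j) (x t)
            = (x t j - x t i) * esym m ((Finset.univ.erase i).erase j) (x t) :=
          esym_erase_sub (Finset.mem_univ i) (Finset.mem_univ j) hij (x t)
        have hne := hxne i j hij
        have hne' := hxne j i hij.symm
        have hEj : esym (m+1) (Finset.univ.erase j) (x t)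
            = esym (m+1) (Finset.univ.erase i) (x t)
              - (x t j - x t i) * esym m ((Finset.univ.erase i).erase j) (x t) := by
          linarith [h5]
        simp only [ha]
        rw [hEj]
        field_simp
        ring
      have htwoS : (∑ i : Fin N, ∑ j ∈ Finset.univ.erase i, a i j)
            + (∑ i : Fin N, ∑ j ∈ Finset.univ.erase i, a i j)
          = ∑ i : Fin N, ∑ j ∈ Finset.univ.erase i,
            (-2 * (x t i * x t j - 1) * esym m ((Finset.univ.erase i).erase j) (x t)) := by
        nth_rewrite 2 [sum_pair_swap a]
        rw [← Finset.sum_add_distrib]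
        refine Finset.sum_congr rfl fun i _ => ?_
        rw [← Finset.sum_add_distrib]
        refine Finset.sum_congr rfl fun j hj => ?_
        have hij : i ≠ j := fun h => (Finset.mem_erase.1 hj).1 h.symm
        exact hpairsum i j hij
      have hsplit : ∑ i : Fin N, ∑ j ∈ Finset.univ.erase i,
          (-2 * (x t i * x t j - 1) * esym m ((Finset.univ.erase i).erase j) (x t))
          = -2 * (∑ i : Fin N, ∑ j ∈ Finset.univ.erase i,
              x t i * x t j * esym m ((Finset.univ.erase i).erase j) (x t))
            + 2 * (∑ i : Fin N, ∑ j ∈ Finset.univ.erase i,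
              esym m ((Finset.univ.erase i).erase j) (x t)) := by
        rw [Finset.mul_sum, Finset.mul_sum, ← Finset.sum_add_distrib]
        refine Finset.sum_congr rfl fun i _ => ?_
        rw [Finset.mul_sum, Finset.mul_sum, ← Finset.sum_add_distrib]
        refine Finset.sum_congr rfl fun j _ => by ring
      have hfin : (∑ i : Fin N, ∑ j ∈ Finset.univ.erase i, a i j)
            + (∑ i : Fin N, ∑ j ∈ Finset.univ.erase i, a i j)
          = -2 * (((m : ℝ) + 1) * ((m : ℝ) + 2) * esym (m+2) Finset.univ (x t))
          + 2 * (((N : ℝ) - (m + 1)) * ((N : ℝ) - m) * esym m Finset.univ (x t)) := by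
        rw [htwoS, hsplit, hQ1, hQ2]
      linarith
    -- assemble
    have htotal : (∑ i : Fin N, d i * esym (m+1) (Finset.univ.erase i) (x t))
        = ((m + 2 : ℕ) : ℝ) * ((p + q) + 1 - ((m + 2 : ℕ) : ℝ)) * esym (m+2) Finset.univ (x t)
          + ((N : ℝ) - ((m + 2 : ℕ) : ℝ) + 1) * (q - p) * esym (m+1) Finset.univ (x t)
          + ((N : ℝ) - ((m + 2 : ℕ) : ℝ) + 2) * ((N : ℝ) - ((m + 2 : ℕ) : ℝ) + 1)
            * esym m Finset.univ (x t) := by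
      have hdsplit : ∀ i : Fin N, d i * esym (m+1) (Finset.univ.erase i) (x t)
          = (q - p) * esym (m+1) (Finset.univ.erase i) (x t)
            + ((q + p) * x t i) * esym (m+1) (Finset.univ.erase i) (x t)
            + (2 * ∑ j ∈ (univ : Finset (Fin N)).erase i,
                (x t i * x t j - 1) / (x t i - x t j))
              * esym (m+1) (Finset.univ.erase i) (x t) := by
        intro i; rw [hd]; ring
      rw [Finset.sum_congr rfl fun i _ => hdsplit i, Finset.sum_add_distrib,
        Finset.sum_add_distrib, hS1, hS2, hS3]
      push_cast
      ring
    rw [← htotal]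
    exact hderiv
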